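/- Let G be a connected graph with at least two vertices and let 𝒯 be a clique tree of G with at least two nodes. If C is a leaf node of 𝒯 (a node of degree exactly one), then C is a simplicial clique of G; that is, there exists a vertex v ∈ C with N[v] = C. -/

import Mathlib

open SimpleGraph

variable {V : Type*}

/-- A `T`-triangle, represented as its vertex set: three pairwise adjacent
vertices at least one of which is a terminal. -/
def IsTTriangle (G : SimpleGraph V) (T Δ : Set V) : Prop :=
  ∃ a b c : V, Δ = {a, b, c} ∧ G.Adj a b ∧ G.Adj a c ∧ G.Adj b c ∧
    (a ∈ T ∨ b ∈ T ∨ c ∈ T)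

/-- The induced subgraph `G − S` contains a `T`-triangle. -/
def HasTTriangleAvoiding (G : SimpleGraph V) (T S : Set V) : Prop :=
  ∃ Δ : Set V, IsTTriangle G T Δ ∧ Δ ∩ S = ∅

/-- The induced subgraph `G − S` contains a `T`-cycle: a cycle of `G` avoiding
`S` and passing through a vertex of `T`. -/
def HasTCycleAvoiding (G : SimpleGraph V) (T S : Set V) : Prop :=
  ∃ (v : V) (c : G.Walk v v), c.IsCycle ∧ (∀ x ∈ c.support, x ∉ S) ∧
    ∃ t ∈ T, t ∈ c.support

/-- `S` is a subset feedback vertex set of `G` with respect to `T`: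
`G − S` contains no `T`-cycle. -/
def IsSubsetFVS (G : SimpleGraph V) (T S : Set V) : Prop :=
  ¬ HasTCycleAvoiding G T S

/-- A cycle has a chord: an edge of `G` between two vertices of the cycle
which is not an edge of the cycle. -/
def WalkHasChord (G : SimpleGraph V) {v : V} (c : G.Walk v v) : Prop :=
  ∃ x y : V, x ∈ c.support ∧ y ∈ c.support ∧ G.Adj x y ∧ s(x, y) ∉ c.edges

/-- A graph is chordal if every cycle of length at least four has a chord. -/
def Chordal (G : SimpleGraph V) : Prop :=
  ∀ (v : V) (c : G.Walk v v), c.IsCycle → 4 ≤ c.length → WalkHasChord G c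

/-- A bridge: an edge lying on no cycle of the graph. -/
def IsBridgeEdge (G : SimpleGraph V) (e : Sym2 V) : Prop :=
  e ∈ G.edgeSet ∧ ∀ (v : V) (c : G.Walk v v), c.IsCycle → e ∉ c.edges

/-- `(K, I)` is a split partition of `G`: `K` is a clique, `I` an independent
set, and they partition the vertex set. -/
def IsSplitPartition (G : SimpleGraph V) (K I : Set V) : Prop :=
  K ∪ I = Set.univ ∧ K ∩ I = ∅ ∧ G.IsClique K ∧ I.Pairwise fun a b => ¬ G.Adj a b

/-- The closed neighbourhood `N[v]` of a vertex. -/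
def closedNbhd (G : SimpleGraph V) (v : V) : Set V := insert v (G.neighborSet v)

/-- A vertex is simplicial if its closed neighbourhood is a clique. -/
def IsSimplicial (G : SimpleGraph V) (v : V) : Prop := G.IsClique (closedNbhd G v)

/-- A maximal clique. -/
def IsMaxClique (G : SimpleGraph V) (C : Set V) : Prop :=
  G.IsClique C ∧ ∀ C' : Set V, G.IsClique C' → C ⊆ C' → C' = C

/-- A matching, as a set of edges of `G` no two of which share an endvertex. -/
def IsEdgeMatching (G : SimpleGraph V) (M : Set (Sym2 V)) : Prop :=
  M ⊆ G.edgeSet ∧ ∀ e ∈ M, ∀ f ∈ M, e ≠ f → ∀ z : V, z ∈ e → z ∉ f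

/-- A set of edges saturates a vertex if some edge of it is incident with it. -/
def Saturates (M : Set (Sym2 V)) (z : V) : Prop := ∃ e ∈ M, z ∈ e

/-- `M` is a `t`-expansion of `X` into `Y`: every edge of `M` goes between `X`
and `Y`, every vertex of `X` is incident with exactly `t` edges of `M`, and the
edges of `M` are incident with exactly `t * |X|` distinct vertices of `Y`. -/
def IsExpansion (G : SimpleGraph V) (t : ℕ) (X Y : Set V) (M : Set (Sym2 V)) : Prop :=
  M ⊆ G.edgeSet ∧ (∀ e ∈ M, ∃ x ∈ X, ∃ y ∈ Y, e = s(x, y)) ∧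
    (∀ x ∈ X, {e ∈ M | x ∈ e}.ncard = t) ∧
    {y ∈ Y | Saturates M y}.ncard = t * X.ncard


lemma exists_maxClique_superset {V : Type} [Fintype V] (G : SimpleGraph V)
    (s : Set V) (hs : G.IsClique s) : ∃ C : Set V, IsMaxClique G C ∧ s ⊆ C := by
  classical
  have hfin : {C : Set V | G.IsClique C ∧ s ⊆ C}.Finite := Set.toFinite _
  have hne : {C : Set V | G.IsClique C ∧ s ⊆ C}.Nonempty := ⟨s, hs, subset_rfl⟩
  obtain ⟨a, ha, hmax⟩ := Set.Finite.exists_maximalFor Set.ncard _ hfin hne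
  refine ⟨a, ⟨ha.1, ?_⟩, ha.2⟩
  intro C' hC' hsub
  have hC'mem : C' ∈ {C : Set V | G.IsClique C ∧ s ⊆ C} := ⟨hC', ha.2.trans hsub⟩
  have hle : a.ncard ≤ C'.ncard := Set.ncard_le_ncard hsub (Set.toFinite _)
  have heq := hmax hC'mem hle
  exact (Set.eq_of_subset_of_ncard_le hsub heq.ge (Set.toFinite _)).symm

/-- a leaf node of a clique tree of a connected graph with at
least two vertices is a simplicial clique. -/
theorem stmt4 {V : Type} [Fintype V] (G : SimpleGraph V)
    (hconn : G.Connected) (hV : 2 ≤ Fintype.card V)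
    (𝒯 : SimpleGraph {C : Set V // IsMaxClique G C})
    (htree : 𝒯.IsTree)
    (hinter : ∀ (C₁ C₂ C : {C : Set V // IsMaxClique G C})
      (p : 𝒯.Walk C₁ C₂), p.IsPath → C ∈ p.support → C₁.val ∩ C₂.val ⊆ C.val)
    (hnodes : ∃ C₁ C₂ : {C : Set V // IsMaxClique G C}, C₁ ≠ C₂)
    (C : {C : Set V // IsMaxClique G C})
    (hleaf : ∃! D : {C : Set V // IsMaxClique G C}, 𝒯.Adj C D) :
    ∃ v ∈ C.val, closedNbhd G v = C.val := by
  classical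
  obtain ⟨D, hCD, huniq⟩ := hleaf
  -- C \ D is nonempty
  have hCneD : C ≠ D := hCD.ne
  have hvex : ∃ v, v ∈ C.val ∧ v ∉ D.val := by
    by_contra h
    push_neg at h
    have hsub : C.val ⊆ D.val := fun x hx => h x hx
    have := C.prop.2 D.val D.prop.1 hsub
    exact hCneD (Subtype.ext this.symm)
  obtain ⟨v, hvC, hvD⟩ := hvex
  -- key: any maximal clique containing v equals C
  have key : ∀ C' : {C : Set V // IsMaxClique G C}, v ∈ C'.val → C' = C := by
    intro C' hvC'
    by_contra hne
    have hreach : 𝒯.Reachable C C' := htree.isConnected.1 C C'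
    obtain ⟨p, hp⟩ : ∃ p : 𝒯.Walk C C', p.IsPath := ⟨hreach.some.toPath.1, hreach.some.toPath.2⟩
    have hDin : D ∈ p.support := by
      cases p with
      | nil => exact absurd rfl (Ne.symm hne)
      | cons h q =>
        rename_i w
        have : w = D := huniq w h
        subst this
        simp [SimpleGraph.Walk.support_cons]
    have := hinter C C' D p hp hDin
    exact hvD (this ⟨hvC, hvC'⟩)
  refine ⟨v, hvC, ?_⟩
  ext u
  constructor
  · intro hu
    rcases hu with rfl | hu
    · exact hvC
    · -- u adjacent to v
      have hadj : G.Adj v u := hu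
      obtain ⟨K, hK, hsubK⟩ := exists_maxClique_superset G {v, u} (by
        intro x hx y hy hxy
        rcases hx with rfl | rfl <;> rcases hy with rfl | rfl <;>
          first | exact absurd rfl hxy | exact hadj | exact hadj.symm)
      have : (⟨K, hK⟩ : {C : Set V // IsMaxClique G C}) = C :=
        key _ (hsubK (by simp))
      have hKC : K = C.val := congrArg Subtype.val this
      exact hKC ▸ hsubK (by simp)
  · intro hu
    by_cases huv : u = v
    · subst huv; exact Set.mem_insert u _
    · exact Set.mem_insert_of_mem _ (C.prop.1 hvC hu (Ne.symm huv))
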